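/- arXiv:2310.14826 — 4 statements merged into one kernel-verified Lean document; each statement's English description precedes it below -/
import Mathlib

section
/- If the loss class L = {ℓ_g : g ∈ G} is of VC-type with constant envelope U > 0 and parameters v ≥ 1, A ≥ 1, then the class H is of VC-type with constant envelope 2U and parameters ṽ = 4v + 1 and Ã = 6A. -/
open MeasureTheory

noncomputable section

/-- A class of real-valued functions is of VC-type with constant envelope `U > 0` and
parameters `v ≥ 1`, `A ≥ 1` if all its members are bounded by `U` and, for every probability
measure `Q` and every `ε ∈ (0,1)`, the class can be covered by at most `(A/ε)^v` closed
`L₂(Q)`-balls of radius `ε·U`. -/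
def IsVCType {S : Type*} [MeasurableSpace S] (F : Set (S → ℝ)) (U v A : ℝ) : Prop :=
  (∀ f ∈ F, ∀ x, |f x| ≤ U) ∧
    ∀ Q : Measure S, IsProbabilityMeasure Q → ∀ ε : ℝ, 0 < ε → ε < 1 →
      ∃ G : Finset (S → ℝ), (G.card : ℝ) ≤ (A / ε) ^ v ∧
        ∀ f ∈ F, ∃ g ∈ G, (∫ x, (f x - g x) ^ 2 ∂Q) ≤ (ε * U) ^ 2

/-- `p = P(Y = 1)`. -/
def pPos {𝒳 : Type*} [MeasurableSpace 𝒳] (P : Measure (𝒳 × ℝ)) : ℝ :=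
  (P {z | z.2 = 1}).toReal

/-- `P(f · 1{Y = 1})`. -/
def intPos {𝒳 : Type*} [MeasurableSpace 𝒳] (P : Measure (𝒳 × ℝ)) (f : 𝒳 × ℝ → ℝ) : ℝ :=
  ∫ z, (if z.2 = 1 then f z else 0) ∂P

/-- `P(f · 1{Y = -1})`. -/
def intNeg {𝒳 : Type*} [MeasurableSpace 𝒳] (P : Measure (𝒳 × ℝ)) (f : 𝒳 × ℝ → ℝ) : ℝ :=
  ∫ z, (if z.2 = -1 then f z else 0) ∂P

/-- `P₊(f) = E[f(X,Y) | Y = 1]`. -/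
def Pplus {𝒳 : Type*} [MeasurableSpace 𝒳] (P : Measure (𝒳 × ℝ)) (f : 𝒳 × ℝ → ℝ) : ℝ :=
  intPos P f / pPos P

/-- `P₋(f) = E[f(X,Y) | Y = -1]`. -/
def Pminus {𝒳 : Type*} [MeasurableSpace 𝒳] (P : Measure (𝒳 × ℝ)) (f : 𝒳 × ℝ → ℝ) : ℝ :=
  intNeg P f / (P {z | z.2 = -1}).toReal

/-- Conditional variance of `f(X,Y)` given `Y = 1`. -/
def VarPlus {𝒳 : Type*} [MeasurableSpace 𝒳] (P : Measure (𝒳 × ℝ)) (f : 𝒳 × ℝ → ℝ) : ℝ :=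
  Pplus P (fun z => f z ^ 2) - (Pplus P f) ^ 2

/-- Conditional variance of `f(X,Y)` given `Y = -1`. -/
def VarMinus {𝒳 : Type*} [MeasurableSpace 𝒳] (P : Measure (𝒳 × ℝ)) (f : 𝒳 × ℝ → ℝ) : ℝ :=
  Pminus P (fun z => f z ^ 2) - (Pminus P f) ^ 2

/-- Weighted probability `P_q(f) = (1/2)(q⁻¹ P(f·1{Y=1}) + (1-q)⁻¹ P(f·1{Y=-1}))`. -/
def Pw {𝒳 : Type*} [MeasurableSpace 𝒳] (P : Measure (𝒳 × ℝ)) (q : ℝ) (f : 𝒳 × ℝ → ℝ) : ℝ :=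
  (intPos P f / q + intNeg P f / (1 - q)) / 2

/-- Empirical measure of a sample: `P_n(f) = (1/n) ∑ f(X_i,Y_i)`. -/
def Pemp {𝒳 : Type*} {n : ℕ} (ω : Fin n → 𝒳 × ℝ) (f : 𝒳 × ℝ → ℝ) : ℝ :=
  (∑ i, f (ω i)) / n

/-- Empirical frequency of the positive class. -/
def pHat {𝒳 : Type*} {n : ℕ} (ω : Fin n → 𝒳 × ℝ) : ℝ :=
  Pemp ω fun z => if z.2 = 1 then 1 else 0

/-- `P_{n,+}(f) = P_n(f · 1{Y=1}) / p̂` (equal to `0` when `p̂ = 0`, since division by zero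
is zero in Lean). -/
def PempPos {𝒳 : Type*} {n : ℕ} (ω : Fin n → 𝒳 × ℝ) (f : 𝒳 × ℝ → ℝ) : ℝ :=
  Pemp ω (fun z => if z.2 = 1 then f z else 0) / pHat ω

/-- `P_{n,-}(f) = P_n(f · 1{Y=-1}) / (1 - p̂)`. -/
def PempNeg {𝒳 : Type*} {n : ℕ} (ω : Fin n → 𝒳 × ℝ) (f : 𝒳 × ℝ → ℝ) : ℝ :=
  Pemp ω (fun z => if z.2 = -1 then f z else 0) / (1 - pHat ω)

/-- Weighted empirical probability
`P_{n,q}(f) = (1/2)(q⁻¹ P_n(f·1{Y=1}) + (1-q)⁻¹ P_n(f·1{Y=-1}))`. -/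
def Pwemp {𝒳 : Type*} {n : ℕ} (ω : Fin n → 𝒳 × ℝ) (q : ℝ) (f : 𝒳 × ℝ → ℝ) : ℝ :=
  (Pemp ω (fun z => if z.2 = 1 then f z else 0) / q
    + Pemp ω (fun z => if z.2 = -1 then f z else 0) / (1 - q)) / 2

private lemma cs_integral {S : Type*} [MeasurableSpace S] {Q : Measure S}
    {F G : S → ℝ} (hF : AEStronglyMeasurable F Q) (hG : AEStronglyMeasurable G Q)
    (hF2 : Integrable (fun x => F x ^ 2) Q) (hG2 : Integrable (fun x => G x ^ 2) Q) :
    ∫ x, F x * G x ∂Q ≤ Real.sqrt (∫ x, F x ^ 2 ∂Q) * Real.sqrt (∫ x, G x ^ 2 ∂Q) := by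
  have hFG : Integrable (fun x => F x * G x) Q := by
    refine Integrable.mono' (hF2.add hG2) (hF.mul hG) (Filter.Eventually.of_forall fun x => ?_)
    simp only [Pi.add_apply, Real.norm_eq_abs, abs_mul]
    nlinarith [sq_nonneg (|F x| - |G x|), sq_abs (F x), sq_abs (G x),
      abs_nonneg (F x), abs_nonneg (G x)]
  have hFGabs : Integrable (fun x => ‖F x‖ * ‖G x‖) Q := by
    refine hFG.abs.congr (Filter.Eventually.of_forall fun x => ?_)
    simp [Real.norm_eq_abs, abs_mul]
  have h2 : (ENNReal.ofReal (2 : ℝ)) = 2 := by norm_num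
  have hFm : MemLp F (ENNReal.ofReal (2 : ℝ)) Q := by
    rw [h2]; exact (memLp_two_iff_integrable_sq hF).2 hF2
  have hGm : MemLp G (ENNReal.ofReal (2 : ℝ)) Q := by
    rw [h2]; exact (memLp_two_iff_integrable_sq hG).2 hG2
  have hpq : Real.HolderConjugate 2 2 := Real.HolderConjugate.two_two
  have key := integral_mul_norm_le_Lp_mul_Lq (μ := Q) hpq hFm hGm
  have habs : ∀ x : ℝ, ‖x‖ ^ (2 : ℝ) = x ^ 2 := fun x => by
    rw [Real.norm_eq_abs, show (2 : ℝ) = ((2 : ℕ) : ℝ) by norm_num, Real.rpow_natCast, sq_abs]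
  rw [show (∫ a, ‖F a‖ ^ (2:ℝ) ∂Q) = ∫ x, F x ^ 2 ∂Q from
      integral_congr_ae (Filter.Eventually.of_forall fun x => habs (F x)),
    show (∫ a, ‖G a‖ ^ (2:ℝ) ∂Q) = ∫ x, G x ^ 2 ∂Q from
      integral_congr_ae (Filter.Eventually.of_forall fun x => habs (G x))] at key
  have hmono : ∫ x, F x * G x ∂Q ≤ ∫ x, ‖F x‖ * ‖G x‖ ∂Q := by
    refine integral_mono hFG hFGabs fun x => ?_
    rw [Real.norm_eq_abs, Real.norm_eq_abs, ← abs_mul]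
    exact le_abs_self _
  calc ∫ x, F x * G x ∂Q ≤ ∫ x, ‖F x‖ * ‖G x‖ ∂Q := hmono
    _ ≤ (∫ x, F x ^ 2 ∂Q) ^ (1 / (2:ℝ)) * (∫ x, G x ^ 2 ∂Q) ^ (1 / (2:ℝ)) := key
    _ = _ := by rw [Real.sqrt_eq_rpow, Real.sqrt_eq_rpow]

private lemma l2_add_le {S : Type*} [MeasurableSpace S] {Q : Measure S}
    {F G : S → ℝ} (hF : AEStronglyMeasurable F Q) (hG : AEStronglyMeasurable G Q)
    (hF2 : Integrable (fun x => F x ^ 2) Q) (hG2 : Integrable (fun x => G x ^ 2) Q) :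
    ∫ x, (F x + G x) ^ 2 ∂Q ≤
      (Real.sqrt (∫ x, F x ^ 2 ∂Q) + Real.sqrt (∫ x, G x ^ 2 ∂Q)) ^ 2 := by
  have hFG : Integrable (fun x => F x * G x) Q := by
    refine Integrable.mono' (hF2.add hG2) (hF.mul hG) (Filter.Eventually.of_forall fun x => ?_)
    simp only [Pi.add_apply, Real.norm_eq_abs, abs_mul]
    nlinarith [sq_nonneg (|F x| - |G x|), sq_abs (F x), sq_abs (G x),
      abs_nonneg (F x), abs_nonneg (G x)]
  have e1 : ∫ x, (F x + G x) ^ 2 ∂Q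
      = ∫ x, (F x ^ 2 + (2 * (F x * G x) + G x ^ 2)) ∂Q :=
    integral_congr_ae (Filter.Eventually.of_forall fun x => by ring)
  have hI2 : Integrable (fun x => 2 * (F x * G x) + G x ^ 2) Q := (hFG.const_mul 2).add hG2
  have hI3 : Integrable (fun x => 2 * (F x * G x)) Q := hFG.const_mul 2
  rw [e1, integral_add hF2 hI2, integral_add hI3 hG2, integral_const_mul]
  have hcs := cs_integral hF hG hF2 hG2
  have hp0 : 0 ≤ ∫ x, F x ^ 2 ∂Q := integral_nonneg fun x => sq_nonneg _
  have hq0 : 0 ≤ ∫ x, G x ^ 2 ∂Q := integral_nonneg fun x => sq_nonneg _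
  nlinarith [Real.sq_sqrt hp0, Real.sq_sqrt hq0, Real.sqrt_nonneg (∫ x, F x ^ 2 ∂Q),
    Real.sqrt_nonneg (∫ x, G x ^ 2 ∂Q)]

set_option maxHeartbeats 2000000 in
/-- Lemma: VC-property of the class `H`. If the loss class
`L = {ℓ_g : g ∈ G}` is of VC-type with envelope `U` and parameters `(v, A)`, then the class
`H = {(1-q)·(ℓ_g - ℓ_{g*_q})·1{Y=1} + q·(ℓ_g - ℓ_{g*_q})·1{Y=-1} : q ∈ (0,1), g ∈ G}`
is of VC-type with envelope `2U` and parameters `(4v+1, 6A)`. -/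
theorem stmt_5 {𝒳 : Type*} [MeasurableSpace 𝒳] (P : Measure (𝒳 × ℝ))
    [IsProbabilityMeasure P]
    (G : Set (𝒳 → ℝ)) (ℓ : ℝ → ℝ → ℝ) (U v A : ℝ)
    (hU : 0 < U) (hv : 1 ≤ v) (hA : 1 ≤ A)
    (hVC : IsVCType {h | ∃ g ∈ G, h = fun z : 𝒳 × ℝ => ℓ (g z.1) z.2} U v A)
    (gstar : ℝ → 𝒳 → ℝ)
    (hgstar : ∀ q ∈ Set.Ioo (0 : ℝ) 1, gstar q ∈ G ∧
      ∀ g ∈ G, Pw P q (fun z : 𝒳 × ℝ => ℓ (gstar q z.1) z.2)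
        ≤ Pw P q fun z : 𝒳 × ℝ => ℓ (g z.1) z.2) :
    IsVCType
      {h | ∃ q ∈ Set.Ioo (0 : ℝ) 1, ∃ g ∈ G,
        h = fun z : 𝒳 × ℝ =>
          (1 - q) * (if z.2 = 1 then ℓ (g z.1) z.2 - ℓ (gstar q z.1) z.2 else 0)
            + q * (if z.2 = -1 then ℓ (g z.1) z.2 - ℓ (gstar q z.1) z.2 else 0)}
      (2 * U) (4 * v + 1) (6 * A) := by
  classical
  obtain ⟨hEnv, hCov⟩ := hVC
  constructor
  · -- envelope bound
    rintro f ⟨q, ⟨hq0, hq1⟩, g, hg, rfl⟩ z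
    have h1 : |ℓ (g z.1) z.2| ≤ U := hEnv _ ⟨g, hg, rfl⟩ z
    have h2 : |ℓ (gstar q z.1) z.2| ≤ U := hEnv _ ⟨gstar q, (hgstar q ⟨hq0, hq1⟩).1, rfl⟩ z
    rw [abs_le] at h1 h2
    show |(1 - q) * (if z.2 = 1 then ℓ (g z.1) z.2 - ℓ (gstar q z.1) z.2 else 0)
        + q * (if z.2 = -1 then ℓ (g z.1) z.2 - ℓ (gstar q z.1) z.2 else 0)| ≤ 2 * U
    rw [abs_le]
    by_cases hz1 : z.2 = 1
    · have hz2 : ¬ z.2 = -1 := by rw [hz1]; norm_num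
      simp only [if_pos hz1, if_neg hz2, mul_zero, add_zero]
      constructor <;> nlinarith
    · by_cases hz2 : z.2 = -1
      · simp only [if_neg hz1, if_pos hz2, mul_zero, zero_add]
        constructor <;> nlinarith
      · simp only [if_neg hz1, if_neg hz2, mul_zero, add_zero]
        constructor <;> nlinarith
  · -- covering numbers
    intro Q hQ ε hε0 hε1
    haveI := hQ
    have hB0 : (0:ℝ) < 6 * A / ε := by positivity
    have h1B : (1:ℝ) ≤ 6 * A / ε := by rw [le_div_iff₀ hε0]; nlinarith
    by_cases Hbad : ∃ u : 𝒳 × ℝ → ℝ, ¬ Integrable (fun z => u z ^ 2) Q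
    · -- pathological measure: a four-element set works since all relevant
      -- integrals are (junk) zero
      obtain ⟨u, hu⟩ := Hbad
      refine ⟨{(fun _ => (0:ℝ)), (fun _ => (1:ℝ)), u, (fun z => u z + 1)}, ?_, ?_⟩
      · have h1c : ({(fun z => u z + 1)} : Finset (𝒳 × ℝ → ℝ)).card = 1 :=
          Finset.card_singleton _
        have h2c := Finset.card_insert_le u ({(fun z => u z + 1)} : Finset (𝒳 × ℝ → ℝ))
        have h3c := Finset.card_insert_le (fun _ => (1:ℝ))
          (insert u ({(fun z => u z + 1)} : Finset (𝒳 × ℝ → ℝ)))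
        have h4c := Finset.card_insert_le (fun _ => (0:ℝ))
          (insert (fun _ => (1:ℝ)) (insert u ({(fun z => u z + 1)} : Finset (𝒳 × ℝ → ℝ))))
        have hc4 : ({(fun _ => (0:ℝ)), (fun _ => (1:ℝ)), u, (fun z => u z + 1)} :
            Finset (𝒳 × ℝ → ℝ)).card ≤ 4 := by omega
        have hpow : 6 * A / ε ≤ (6 * A / ε) ^ (4 * v + 1) := by
          calc 6 * A / ε = (6 * A / ε) ^ (1:ℝ) := (Real.rpow_one _).symm
            _ ≤ _ := Real.rpow_le_rpow_of_exponent_le h1B (by linarith)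
        have h6 : (6:ℝ) ≤ 6 * A / ε := by rw [le_div_iff₀ hε0]; nlinarith
        calc (({(fun _ => (0:ℝ)), (fun _ => (1:ℝ)), u, (fun z => u z + 1)} :
              Finset (𝒳 × ℝ → ℝ)).card : ℝ) ≤ 4 := by exact_mod_cast hc4
          _ ≤ 6 * A / ε := by linarith
          _ ≤ _ := hpow
      · intro f _
        by_cases c1 : Integrable (fun z => (f z - u z) ^ 2) Q
        · by_cases c2 : Integrable (fun z => (f z - (u z + 1)) ^ 2) Q
          · by_cases c3 : Integrable (fun z => (f z - 0) ^ 2) Q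
            · by_cases c4 : Integrable (fun z => (f z - 1) ^ 2) Q
              · exfalso
                have mA : AEStronglyMeasurable f Q := by
                  have d : AEStronglyMeasurable
                      (fun z => ((f z - 0) ^ 2 - (f z - 1) ^ 2 + 1) * (1/2)) Q :=
                    ((c3.sub c4).aestronglyMeasurable.add aestronglyMeasurable_const).mul
                      aestronglyMeasurable_const
                  exact d.congr (Filter.Eventually.of_forall fun z => by ring)
                have mB : AEStronglyMeasurable (fun z => f z - u z) Q := by
                  have d : AEStronglyMeasurable
                      (fun z => ((f z - u z) ^ 2 - (f z - (u z + 1)) ^ 2 + 1) * (1/2)) Q :=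
                    ((c1.sub c2).aestronglyMeasurable.add aestronglyMeasurable_const).mul
                      aestronglyMeasurable_const
                  exact d.congr (Filter.Eventually.of_forall fun z => by ring)
                have mu : AEStronglyMeasurable u Q :=
                  (mA.sub mB).congr (Filter.Eventually.of_forall fun z => by
                    simp only [Pi.sub_apply]; ring)
                have musq : AEStronglyMeasurable (fun z => u z ^ 2) Q := by
                  have d : AEStronglyMeasurable (fun z => u z * u z) Q := mu.mul mu
                  exact d.congr (Filter.Eventually.of_forall fun z => by ring)
                refine hu ?_
                refine Integrable.mono' ((c1.const_mul 2).add (c3.const_mul 2)) musq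
                  (Filter.Eventually.of_forall fun z => ?_)
                simp only [Pi.add_apply]
                rw [Real.norm_eq_abs, abs_of_nonneg (sq_nonneg _)]
                nlinarith [sq_nonneg (f z + (f z - u z))]
              · refine ⟨fun _ => (1:ℝ), by simp, ?_⟩
                have : (∫ x, (f x - (fun _ => (1:ℝ)) x) ^ 2 ∂Q) = 0 := integral_undef c4
                rw [this]; positivity
            · refine ⟨fun _ => (0:ℝ), by simp, ?_⟩
              have : (∫ x, (f x - (fun _ => (0:ℝ)) x) ^ 2 ∂Q) = 0 := integral_undef c3
              rw [this]; positivity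
          · refine ⟨fun z => u z + 1, by simp, ?_⟩
            have : (∫ x, (f x - (fun z => u z + 1) x) ^ 2 ∂Q) = 0 := integral_undef c2
            rw [this]; positivity
        · refine ⟨u, by simp, ?_⟩
          have : (∫ x, (f x - u x) ^ 2 ∂Q) = 0 := integral_undef c1
          rw [this]; positivity
    · -- the honest case: every function is square-integrable
      push_neg at Hbad
      have hAESM : ∀ w : 𝒳 × ℝ → ℝ, AEStronglyMeasurable w Q := by
        intro w
        have h1 := Hbad (fun z => w z + 1)
        have h2 := Hbad w
        have h3 : Integrable (fun z => ((w z + 1) ^ 2 - w z ^ 2 - 1) * (1/2)) Q :=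
          ((h1.sub h2).sub (integrable_const 1)).mul_const _
        exact (h3.congr (Filter.Eventually.of_forall fun z => by ring)).aestronglyMeasurable
      obtain ⟨G₀, hG₀card, hG₀cov⟩ := hCov Q hQ (ε/2) (by positivity) (by linarith)
      set K := ⌈(4:ℝ)/ε⌉₊ with hKdef
      have hK4 : (4:ℝ)/ε ≤ K := Nat.le_ceil _
      have hKpos : (0:ℝ) < K := lt_of_lt_of_le (by positivity) hK4
      refine ⟨Finset.image
        (fun p : ((𝒳 × ℝ → ℝ) × (𝒳 × ℝ → ℝ)) × ℕ => (fun z : 𝒳 × ℝ =>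
          (1 - (p.2:ℝ)/(K:ℝ)) * (if z.2 = 1 then p.1.1 z - p.1.2 z else 0)
            + ((p.2:ℝ)/(K:ℝ)) * (if z.2 = -1 then p.1.1 z - p.1.2 z else 0)))
        ((G₀ ×ˢ G₀) ×ˢ Finset.range (K+1)), ?_, ?_⟩
      · -- cardinality bound
        have hc1 : ((G₀ ×ˢ G₀) ×ˢ Finset.range (K+1)).card = G₀.card * G₀.card * (K+1) := by
          rw [Finset.card_product, Finset.card_product, Finset.card_range]
        have hcle := (Finset.card_image_le (s := (G₀ ×ˢ G₀) ×ˢ Finset.range (K+1))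
          (f := fun p : ((𝒳 × ℝ → ℝ) × (𝒳 × ℝ → ℝ)) × ℕ => (fun z : 𝒳 × ℝ =>
          (1 - (p.2:ℝ)/(K:ℝ)) * (if z.2 = 1 then p.1.1 z - p.1.2 z else 0)
            + ((p.2:ℝ)/(K:ℝ)) * (if z.2 = -1 then p.1.1 z - p.1.2 z else 0)))).trans hc1.le
        have hGB : (G₀.card : ℝ) ≤ (6 * A / ε) ^ v := by
          refine le_trans hG₀card ?_
          have he : A / (ε/2) = 2 * A / ε := by
            rw [div_div_eq_mul_div, mul_comm]
          rw [he]
          refine Real.rpow_le_rpow (by positivity) ?_ (by linarith)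
          rw [div_le_div_iff₀ hε0 hε0]; nlinarith
        have hKB : ((K:ℝ) + 1) ≤ 6 * A / ε := by
          have hceil : (K:ℝ) < 4/ε + 1 := Nat.ceil_lt_add_one (by positivity)
          have h2ε : (2:ℝ) ≤ 2/ε := by rw [le_div_iff₀ hε0]; linarith
          have h66 : (6:ℝ)/ε ≤ 6 * A / ε := by
            rw [div_le_div_iff₀ hε0 hε0]; nlinarith
          have hr : (4:ℝ)/ε + 2/ε = 6/ε := by ring
          linarith
        calc ((Finset.image _ _).card : ℝ)
            ≤ (G₀.card : ℝ) * (G₀.card : ℝ) * ((K:ℝ) + 1) := by exact_mod_cast hcle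
          _ ≤ (6 * A / ε) ^ v * (6 * A / ε) ^ v * (6 * A / ε) := by
              refine mul_le_mul (mul_le_mul hGB hGB (Nat.cast_nonneg _) (by positivity))
                hKB (by positivity) (by positivity)
          _ = (6 * A / ε) ^ (v + v + 1) := by
              rw [Real.rpow_add hB0, Real.rpow_add hB0, Real.rpow_one]
          _ ≤ _ := Real.rpow_le_rpow_of_exponent_le h1B (by linarith)
      · -- covering property
        rintro f ⟨q, ⟨hq0, hq1⟩, g, hg, rfl⟩
        have hgs : gstar q ∈ G := (hgstar q ⟨hq0, hq1⟩).1
        obtain ⟨f₁, hf₁G, hf₁⟩ := hG₀cov _ ⟨g, hg, rfl⟩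
        obtain ⟨f₂, hf₂G, hf₂⟩ := hG₀cov _ ⟨gstar q, hgs, rfl⟩
        set k := ⌊q * (K:ℝ)⌋₊ with hkdef
        have hkK : k < K + 1 := by
          have hq1K : q * (K:ℝ) < (K:ℝ) := by nlinarith
          have hqK0 : 0 ≤ q * (K:ℝ) := mul_nonneg (le_of_lt hq0) (le_of_lt hKpos)
          have h5 : ⌊q * (K:ℝ)⌋₊ < K := (Nat.floor_lt hqK0).2 (by exact_mod_cast hq1K)
          omega
        have hqK0 : 0 ≤ q * (K:ℝ) := mul_nonneg (le_of_lt hq0) (le_of_lt hKpos)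
        have htq : (k:ℝ)/(K:ℝ) ≤ q := by
          rw [div_le_iff₀ hKpos]
          exact Nat.floor_le hqK0
        have hqt : q - (k:ℝ)/(K:ℝ) ≤ ε/4 := by
          have h1 : q * (K:ℝ) < (k:ℝ) + 1 := Nat.lt_floor_add_one _
          have h2 : (4:ℝ) ≤ (K:ℝ) * ε := (div_le_iff₀ hε0).1 hK4
          have h3 : q ≤ (k:ℝ)/(K:ℝ) + 1/(K:ℝ) := by
            rw [← add_div, le_div_iff₀ hKpos]; linarith
          have h4 : 1/(K:ℝ) ≤ ε/4 := by
            rw [div_le_div_iff₀ hKpos (by norm_num)]; linarith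
          linarith
        have ht0 : 0 ≤ (k:ℝ)/(K:ℝ) := by positivity
        have ht1 : (k:ℝ)/(K:ℝ) ≤ 1 := le_trans htq (le_of_lt hq1)
        refine ⟨(fun z : 𝒳 × ℝ =>
          (1 - (k:ℝ)/(K:ℝ)) * (if z.2 = 1 then f₁ z - f₂ z else 0)
            + ((k:ℝ)/(K:ℝ)) * (if z.2 = -1 then f₁ z - f₂ z else 0)), ?_, ?_⟩
        · exact Finset.mem_image.2 ⟨⟨⟨f₁, f₂⟩, k⟩, by
            simp [Finset.mem_product, Finset.mem_range, hf₁G, hf₂G, hkK], rfl⟩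
        show (∫ x, ((1 - q) * (if x.2 = 1 then ℓ (g x.1) x.2 - ℓ (gstar q x.1) x.2 else 0)
            + q * (if x.2 = -1 then ℓ (g x.1) x.2 - ℓ (gstar q x.1) x.2 else 0)
            - ((1 - (k:ℝ)/(K:ℝ)) * (if x.2 = 1 then f₁ x - f₂ x else 0)
            + ((k:ℝ)/(K:ℝ)) * (if x.2 = -1 then f₁ x - f₂ x else 0))) ^ 2 ∂Q)
          ≤ (ε * (2 * U)) ^ 2
        -- pointwise bound
        have hpt : ∀ x : 𝒳 × ℝ,
            ((1 - q) * (if x.2 = 1 then ℓ (g x.1) x.2 - ℓ (gstar q x.1) x.2 else 0)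
            + q * (if x.2 = -1 then ℓ (g x.1) x.2 - ℓ (gstar q x.1) x.2 else 0)
            - ((1 - (k:ℝ)/(K:ℝ)) * (if x.2 = 1 then f₁ x - f₂ x else 0)
            + ((k:ℝ)/(K:ℝ)) * (if x.2 = -1 then f₁ x - f₂ x else 0))) ^ 2
            ≤ (ε/4 * (2*U)
              + |(ℓ (g x.1) x.2 - f₁ x) - (ℓ (gstar q x.1) x.2 - f₂ x)|) ^ 2 := by
          intro x
          have hX : |ℓ (g x.1) x.2| ≤ U := hEnv _ ⟨g, hg, rfl⟩ x
          have hY : |ℓ (gstar q x.1) x.2| ≤ U := hEnv _ ⟨gstar q, hgs, rfl⟩ x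
          rw [abs_le] at hX hY
          have hwnn : 0 ≤ |(ℓ (g x.1) x.2 - f₁ x) - (ℓ (gstar q x.1) x.2 - f₂ x)| :=
            abs_nonneg _
          have hcnn : (0:ℝ) ≤ ε/4 * (2*U) := by nlinarith
          have ha : |(k:ℝ)/(K:ℝ) - q| ≤ ε/4 := by rw [abs_le]; constructor <;> linarith
          have hb : |ℓ (g x.1) x.2 - ℓ (gstar q x.1) x.2| ≤ 2*U := by
            rw [abs_le]; constructor <;> linarith
          by_cases hz1 : x.2 = 1
          · have hz2 : ¬ x.2 = -1 := by rw [hz1]; norm_num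
            simp only [if_pos hz1, if_neg hz2, mul_zero, add_zero]
            have key : |(1 - q) * (ℓ (g x.1) x.2 - ℓ (gstar q x.1) x.2)
                - (1 - (k:ℝ)/(K:ℝ)) * (f₁ x - f₂ x)|
                ≤ ε/4 * (2*U)
                  + |(ℓ (g x.1) x.2 - f₁ x) - (ℓ (gstar q x.1) x.2 - f₂ x)| := by
              have e : (1 - q) * (ℓ (g x.1) x.2 - ℓ (gstar q x.1) x.2)
                  - (1 - (k:ℝ)/(K:ℝ)) * (f₁ x - f₂ x)
                  = ((k:ℝ)/(K:ℝ) - q) * (ℓ (g x.1) x.2 - ℓ (gstar q x.1) x.2)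
                    + (1 - (k:ℝ)/(K:ℝ))
                      * ((ℓ (g x.1) x.2 - f₁ x) - (ℓ (gstar q x.1) x.2 - f₂ x)) := by ring
              rw [e]
              have h1 : |((k:ℝ)/(K:ℝ) - q) * (ℓ (g x.1) x.2 - ℓ (gstar q x.1) x.2)|
                  ≤ ε/4 * (2*U) := by
                rw [abs_mul]
                exact mul_le_mul ha hb (abs_nonneg _) (by linarith)
              have h2 : |(1 - (k:ℝ)/(K:ℝ))
                  * ((ℓ (g x.1) x.2 - f₁ x) - (ℓ (gstar q x.1) x.2 - f₂ x))|
                  ≤ |(ℓ (g x.1) x.2 - f₁ x) - (ℓ (gstar q x.1) x.2 - f₂ x)| := by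
                rw [abs_mul]
                refine mul_le_of_le_one_left (abs_nonneg _) ?_
                rw [abs_le]; constructor <;> linarith
              exact le_trans (abs_add_le _ _) (add_le_add h1 h2)
            rw [abs_le] at key
            exact sq_le_sq' (by linarith [key.1]) key.2
          · by_cases hz2 : x.2 = -1
            · simp only [if_neg hz1, if_pos hz2, mul_zero, zero_add]
              have key : |q * (ℓ (g x.1) x.2 - ℓ (gstar q x.1) x.2)
                  - ((k:ℝ)/(K:ℝ)) * (f₁ x - f₂ x)|
                  ≤ ε/4 * (2*U)
                    + |(ℓ (g x.1) x.2 - f₁ x) - (ℓ (gstar q x.1) x.2 - f₂ x)| := by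
                have e : q * (ℓ (g x.1) x.2 - ℓ (gstar q x.1) x.2)
                    - ((k:ℝ)/(K:ℝ)) * (f₁ x - f₂ x)
                    = (q - (k:ℝ)/(K:ℝ)) * (ℓ (g x.1) x.2 - ℓ (gstar q x.1) x.2)
                      + ((k:ℝ)/(K:ℝ))
                        * ((ℓ (g x.1) x.2 - f₁ x) - (ℓ (gstar q x.1) x.2 - f₂ x)) := by ring
                rw [e]
                have h1 : |(q - (k:ℝ)/(K:ℝ)) * (ℓ (g x.1) x.2 - ℓ (gstar q x.1) x.2)|
                    ≤ ε/4 * (2*U) := by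
                  rw [abs_mul]
                  refine mul_le_mul ?_ hb (abs_nonneg _) (by linarith)
                  rw [abs_le]; constructor <;> linarith
                have h2 : |((k:ℝ)/(K:ℝ))
                    * ((ℓ (g x.1) x.2 - f₁ x) - (ℓ (gstar q x.1) x.2 - f₂ x))|
                    ≤ |(ℓ (g x.1) x.2 - f₁ x) - (ℓ (gstar q x.1) x.2 - f₂ x)| := by
                  rw [abs_mul]
                  refine mul_le_of_le_one_left (abs_nonneg _) ?_
                  rw [abs_le]; constructor <;> linarith
                exact le_trans (abs_add_le _ _) (add_le_add h1 h2)
              rw [abs_le] at key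
              exact sq_le_sq' (by linarith [key.1]) key.2
            · simp only [if_neg hz1, if_neg hz2]
              nlinarith [hwnn, hcnn]
        -- the L² estimate
        have hs1 : Real.sqrt (∫ x, (ℓ (g x.1) x.2 - f₁ x) ^ 2 ∂Q) ≤ ε/2 * U := by
          have h' : (∫ x, (ℓ (g x.1) x.2 - f₁ x) ^ 2 ∂Q) ≤ (ε/2 * U) ^ 2 := hf₁
          calc Real.sqrt (∫ x, (ℓ (g x.1) x.2 - f₁ x) ^ 2 ∂Q)
              ≤ Real.sqrt ((ε/2 * U) ^ 2) := Real.sqrt_le_sqrt h'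
            _ = ε/2 * U := Real.sqrt_sq (by positivity)
        have hs2 : Real.sqrt (∫ x, (ℓ (gstar q x.1) x.2 - f₂ x) ^ 2 ∂Q) ≤ ε/2 * U := by
          have h' : (∫ x, (ℓ (gstar q x.1) x.2 - f₂ x) ^ 2 ∂Q) ≤ (ε/2 * U) ^ 2 := hf₂
          calc Real.sqrt (∫ x, (ℓ (gstar q x.1) x.2 - f₂ x) ^ 2 ∂Q)
              ≤ Real.sqrt ((ε/2 * U) ^ 2) := Real.sqrt_le_sqrt h'
            _ = ε/2 * U := Real.sqrt_sq (by positivity)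
        have hab : (∫ x, ((ℓ (g x.1) x.2 - f₁ x) - (ℓ (gstar q x.1) x.2 - f₂ x)) ^ 2 ∂Q)
            ≤ (ε * U) ^ 2 := by
          have key2 := l2_add_le (Q := Q) (F := fun x => ℓ (g x.1) x.2 - f₁ x)
            (G := fun x => -(ℓ (gstar q x.1) x.2 - f₂ x)) (hAESM _) (hAESM _)
            (Hbad _) (Hbad _)
          have eFG : (∫ x, ((ℓ (g x.1) x.2 - f₁ x) - (ℓ (gstar q x.1) x.2 - f₂ x)) ^ 2 ∂Q)
              = ∫ x, ((ℓ (g x.1) x.2 - f₁ x) + -(ℓ (gstar q x.1) x.2 - f₂ x)) ^ 2 ∂Q :=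
            integral_congr_ae (Filter.Eventually.of_forall fun x => by ring)
          have eG : (∫ x, (-(ℓ (gstar q x.1) x.2 - f₂ x)) ^ 2 ∂Q)
              = ∫ x, (ℓ (gstar q x.1) x.2 - f₂ x) ^ 2 ∂Q :=
            integral_congr_ae (Filter.Eventually.of_forall fun x => by ring)
          rw [eG] at key2
          rw [eFG]
          refine le_trans key2 ?_
          have := Real.sqrt_nonneg (∫ x, (ℓ (g x.1) x.2 - f₁ x) ^ 2 ∂Q)
          have := Real.sqrt_nonneg (∫ x, (ℓ (gstar q x.1) x.2 - f₂ x) ^ 2 ∂Q)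
          nlinarith
        have hsab : Real.sqrt (∫ x,
            |(ℓ (g x.1) x.2 - f₁ x) - (ℓ (gstar q x.1) x.2 - f₂ x)| ^ 2 ∂Q) ≤ ε * U := by
          have habs2 : (∫ x,
              |(ℓ (g x.1) x.2 - f₁ x) - (ℓ (gstar q x.1) x.2 - f₂ x)| ^ 2 ∂Q)
              = ∫ x, ((ℓ (g x.1) x.2 - f₁ x) - (ℓ (gstar q x.1) x.2 - f₂ x)) ^ 2 ∂Q :=
            integral_congr_ae (Filter.Eventually.of_forall fun x => sq_abs _)
          rw [habs2]
          calc Real.sqrt (∫ x, ((ℓ (g x.1) x.2 - f₁ x) - (ℓ (gstar q x.1) x.2 - f₂ x)) ^ 2 ∂Q)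
              ≤ Real.sqrt ((ε * U) ^ 2) := Real.sqrt_le_sqrt hab
            _ = ε * U := Real.sqrt_sq (by positivity)
        have hconst : (∫ x, ((fun _ : 𝒳 × ℝ => ε/4 * (2*U)) x) ^ 2 ∂Q) = (ε/4 * (2*U)) ^ 2 := by
          simp [integral_const]
        calc (∫ x, ((1 - q) * (if x.2 = 1 then ℓ (g x.1) x.2 - ℓ (gstar q x.1) x.2 else 0)
            + q * (if x.2 = -1 then ℓ (g x.1) x.2 - ℓ (gstar q x.1) x.2 else 0)
            - ((1 - (k:ℝ)/(K:ℝ)) * (if x.2 = 1 then f₁ x - f₂ x else 0)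
            + ((k:ℝ)/(K:ℝ)) * (if x.2 = -1 then f₁ x - f₂ x else 0))) ^ 2 ∂Q)
            ≤ ∫ x, (ε/4 * (2*U)
              + |(ℓ (g x.1) x.2 - f₁ x) - (ℓ (gstar q x.1) x.2 - f₂ x)|) ^ 2 ∂Q :=
              integral_mono (Hbad _) (Hbad _) hpt
          _ ≤ (Real.sqrt (∫ x, ((fun _ : 𝒳 × ℝ => ε/4 * (2*U)) x) ^ 2 ∂Q)
              + Real.sqrt (∫ x,
                |(ℓ (g x.1) x.2 - f₁ x) - (ℓ (gstar q x.1) x.2 - f₂ x)| ^ 2 ∂Q)) ^ 2 :=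
              l2_add_le (Q := Q) (F := fun _ : 𝒳 × ℝ => ε/4 * (2*U))
                (G := fun x => |(ℓ (g x.1) x.2 - f₁ x) - (ℓ (gstar q x.1) x.2 - f₂ x)|)
                aestronglyMeasurable_const (hAESM _) (Hbad _) (Hbad _)
          _ ≤ (ε * (2 * U)) ^ 2 := by
              rw [hconst, Real.sqrt_sq (by positivity)]
              have hnn := Real.sqrt_nonneg (∫ x,
                |(ℓ (g x.1) x.2 - f₁ x) - (ℓ (gstar q x.1) x.2 - f₂ x)| ^ 2 ∂Q)
              nlinarith

end
end

section
/- Let F and G be classes of measurable functions on a measurable space (S,𝒮), each of VC-type with constant envelope U > 0 and parameters v ≥ 1, A ≥ 1. Then the class {q·f + (1 − q)·g : f ∈ F, g ∈ G, q ∈ [0,1]} is of VC-type with constant envelope U and parameters 2v + 1, 3A. -/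
open MeasureTheory
open scoped NNReal ENNReal

noncomputable section

private lemma junk_cover {S : Type*} [MeasurableSpace S] (Q : Measure S) [IsProbabilityMeasure Q]
    (U : ℝ) (f c : S → ℝ) (hfU : ∀ x, |f x| ≤ U)
    (hjunk : ¬ Integrable (fun x => (f x - c x) ^ 2) Q) :
    ∃ G₀ : Finset (S → ℝ), G₀.card ≤ 3 ∧
      ∀ h : S → ℝ, (∀ x, |h x| ≤ U) →
        ∃ w ∈ G₀, (∫ x, (h x - w x) ^ 2 ∂Q) = 0 := by
  classical
  by_cases hsm : AEStronglyMeasurable (fun x => (f x - c x) ^ 2) Q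
  · -- integral is infinite case
    refine ⟨{c}, by simp, fun h hhU => ⟨c, Finset.mem_singleton_self c, ?_⟩⟩
    apply integral_undef
    intro hint
    apply hjunk
    refine ⟨hsm, ?_⟩
    rw [HasFiniteIntegral]
    have hptw : ∀ x, ‖(f x - c x) ^ 2‖₊ ≤ (2 : ℝ≥0∞) * ‖(h x - c x) ^ 2‖₊ + ENNReal.ofReal (8 * U ^ 2) := by
      intro x
      have h1 : (f x - c x) ^ 2 ≤ 2 * (h x - c x) ^ 2 + 8 * U ^ 2 := by
        have hfh : (f x - h x) ^ 2 ≤ 4 * U ^ 2 := by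
          nlinarith [abs_le.1 (hfU x), abs_le.1 (hhU x)]
        nlinarith [hfh, sq_nonneg (f x - h x - (h x - c x))]
      calc (‖(f x - c x) ^ 2‖₊ : ℝ≥0∞) = ENNReal.ofReal ((f x - c x) ^ 2) := by
            rw [← enorm_eq_nnnorm, ← ofReal_norm_eq_enorm, Real.norm_eq_abs, abs_of_nonneg (sq_nonneg _)]
        _ ≤ ENNReal.ofReal (2 * (h x - c x) ^ 2 + 8 * U ^ 2) := ENNReal.ofReal_le_ofReal h1
        _ ≤ ENNReal.ofReal (2 * (h x - c x) ^ 2) + ENNReal.ofReal (8 * U ^ 2) :=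
            ENNReal.ofReal_add_le
        _ = 2 * ENNReal.ofReal ((h x - c x) ^ 2) + ENNReal.ofReal (8 * U ^ 2) := by
            rw [ENNReal.ofReal_mul (by norm_num : (0:ℝ) ≤ 2)]
            norm_num
        _ = 2 * ‖(h x - c x) ^ 2‖₊ + ENNReal.ofReal (8 * U ^ 2) := by
            rw [← enorm_eq_nnnorm, ← ofReal_norm_eq_enorm, Real.norm_eq_abs, abs_of_nonneg (sq_nonneg _)]
    calc ∫⁻ x, ‖(f x - c x) ^ 2‖₊ ∂Q
        ≤ ∫⁻ x, ((2 : ℝ≥0∞) * ‖(h x - c x) ^ 2‖₊ + ENNReal.ofReal (8 * U ^ 2)) ∂Q :=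
          lintegral_mono hptw
      _ ≤ 2 * ∫⁻ x, ‖(h x - c x) ^ 2‖₊ ∂Q + ENNReal.ofReal (8 * U ^ 2) * Q Set.univ := by
          rw [lintegral_add_right _ measurable_const, lintegral_const]
          gcongr
          exact le_of_eq (lintegral_const_mul' _ _ (by norm_num))
      _ < ⊤ := by
          have := hint.2
          rw [HasFiniteIntegral] at this
          have h2 : (2 : ℝ≥0∞) * ∫⁻ x, ‖(h x - c x) ^ 2‖₊ ∂Q < ⊤ :=
            ENNReal.mul_lt_top (by norm_num) this
          have h3 : ENNReal.ofReal (8 * U ^ 2) * Q Set.univ < ⊤ :=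
            ENNReal.mul_lt_top ENNReal.ofReal_lt_top (measure_lt_top Q _)
          exact ENNReal.add_lt_top.2 ⟨h2, h3⟩
  · -- non-measurable case: Vandermonde trick
    set d : S → ℝ := fun x => |f x - c x| with hd
    refine ⟨{fun x => 1 * d x, fun x => 2 * d x, fun x => 3 * d x}, ?_, fun h hhU => ?_⟩
    · refine le_trans (Finset.card_insert_le _ _) ?_
      have := Finset.card_insert_le (fun x => 2 * d x) ({fun x => 3 * d x} : Finset (S → ℝ))
      simp only [Finset.card_singleton] at this ⊢
      omega
    · have key : ∃ M : ℝ, M ∈ ({1, 2, 3} : Set ℝ) ∧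
          ¬ AEStronglyMeasurable (fun x => (h x - M * d x) ^ 2) Q := by
        by_contra hcon
        push_neg at hcon
        have h1 := hcon 1 (by simp)
        have h2 := hcon 2 (by simp)
        have h3 := hcon 3 (by simp)
        apply hsm
        have heq : (fun x => (f x - c x) ^ 2) =
            fun x => 2⁻¹ * ((h x - 1 * d x) ^ 2 - 2 * (h x - 2 * d x) ^ 2 + (h x - 3 * d x) ^ 2) := by
          funext x
          have : d x ^ 2 = (f x - c x) ^ 2 := sq_abs _
          nlinarith [this]
        rw [heq]
        exact ((h1.sub (h2.const_mul 2)).add h3).const_mul 2⁻¹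
      obtain ⟨M, hM, hnm⟩ := key
      refine ⟨fun x => M * d x, ?_, ?_⟩
      · simp only [Finset.mem_insert, Finset.mem_singleton]
        rcases hM with rfl | rfl | rfl
        · left; rfl
        · right; left; rfl
        · right; right; rfl
      · exact integral_undef (fun hint => hnm hint.1)



private lemma rpow_half_le {X K : ℝ≥0∞} (h : X ≤ K ^ (2:ℝ)) : X ^ (1/2:ℝ) ≤ K := by
  have := ENNReal.rpow_le_rpow h (by norm_num : (0:ℝ) ≤ 1/2)
  rwa [← ENNReal.rpow_mul, show (2:ℝ) * (1/2) = 1 by norm_num, ENNReal.rpow_one] at this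

private lemma mink3 {S : Type*} [MeasurableSpace S] {Q : Measure S}
    (a b e : S → ℝ≥0∞) (ha : AEMeasurable a Q) (hb : AEMeasurable b Q) (he : AEMeasurable e Q)
    (Ka Kb Ke : ℝ≥0∞)
    (hKa : ∫⁻ x, a x ^ (2:ℝ) ∂Q ≤ Ka ^ (2:ℝ))
    (hKb : ∫⁻ x, b x ^ (2:ℝ) ∂Q ≤ Kb ^ (2:ℝ))
    (hKe : ∫⁻ x, e x ^ (2:ℝ) ∂Q ≤ Ke ^ (2:ℝ)) :
    ∫⁻ x, (a x + b x + e x) ^ (2:ℝ) ∂Q ≤ (Ka + Kb + Ke) ^ (2:ℝ) := by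
  have key : (∫⁻ x, (a x + b x + e x) ^ (2:ℝ) ∂Q) ^ (1/2:ℝ) ≤ Ka + Kb + Ke := by
    have step1 : (∫⁻ x, ((a + b) x + e x) ^ (2:ℝ) ∂Q) ^ (1/2:ℝ) ≤
        (∫⁻ x, (a + b) x ^ (2:ℝ) ∂Q) ^ (1/2:ℝ) + (∫⁻ x, e x ^ (2:ℝ) ∂Q) ^ (1/2:ℝ) :=
      ENNReal.lintegral_Lp_add_le (ha.add hb) he one_le_two
    have step2 : (∫⁻ x, (a x + b x) ^ (2:ℝ) ∂Q) ^ (1/2:ℝ) ≤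
        (∫⁻ x, a x ^ (2:ℝ) ∂Q) ^ (1/2:ℝ) + (∫⁻ x, b x ^ (2:ℝ) ∂Q) ^ (1/2:ℝ) :=
      ENNReal.lintegral_Lp_add_le ha hb one_le_two
    simp only [Pi.add_apply] at step1 step2
    calc (∫⁻ x, (a x + b x + e x) ^ (2:ℝ) ∂Q) ^ (1/2:ℝ)
        ≤ (∫⁻ x, (a x + b x) ^ (2:ℝ) ∂Q) ^ (1/2:ℝ) + (∫⁻ x, e x ^ (2:ℝ) ∂Q) ^ (1/2:ℝ) := step1
      _ ≤ ((∫⁻ x, a x ^ (2:ℝ) ∂Q) ^ (1/2:ℝ) + (∫⁻ x, b x ^ (2:ℝ) ∂Q) ^ (1/2:ℝ))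
            + (∫⁻ x, e x ^ (2:ℝ) ∂Q) ^ (1/2:ℝ) := add_le_add step2 le_rfl
      _ ≤ Ka + Kb + Ke := by
          gcongr
          · exact rpow_half_le hKa
          · exact rpow_half_le hKb
          · exact rpow_half_le hKe
  calc ∫⁻ x, (a x + b x + e x) ^ (2:ℝ) ∂Q
      = ((∫⁻ x, (a x + b x + e x) ^ (2:ℝ) ∂Q) ^ (1/2:ℝ)) ^ (2:ℝ) := by
        rw [← ENNReal.rpow_mul, show (1/2:ℝ) * 2 = 1 by norm_num, ENNReal.rpow_one]
    _ ≤ (Ka + Kb + Ke) ^ (2:ℝ) := ENNReal.rpow_le_rpow key (by norm_num)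

private lemma piece {S : Type*} [MeasurableSpace S] {Q : Measure S} (u : S → ℝ) (t r : ℝ)
    (ht : 0 ≤ t) (hr : 0 ≤ r)
    (hint : Integrable (fun x => (u x) ^ 2) Q)
    (hle : (∫ x, (u x) ^ 2 ∂Q) ≤ r ^ 2) :
    ∫⁻ x, (ENNReal.ofReal (t * |u x|)) ^ (2:ℝ) ∂Q ≤ (ENNReal.ofReal (t * r)) ^ (2:ℝ) := by
  have h2 : ∀ y : ℝ≥0∞, y ^ (2:ℝ) = y * y := fun y => by
    rw [show (2:ℝ) = ((2:ℕ):ℝ) by norm_num, ENNReal.rpow_natCast, sq]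
  have hlin : ∫⁻ x, ENNReal.ofReal ((u x) ^ 2) ∂Q ≤ ENNReal.ofReal (r ^ 2) := by
    rw [← ofReal_integral_eq_lintegral_ofReal hint (Filter.Eventually.of_forall fun x => sq_nonneg _)]
    exact ENNReal.ofReal_le_ofReal hle
  calc ∫⁻ x, (ENNReal.ofReal (t * |u x|)) ^ (2:ℝ) ∂Q
      = ∫⁻ x, ENNReal.ofReal (t * t) * ENNReal.ofReal ((u x) ^ 2) ∂Q := by
        congr 1; funext x
        rw [h2, ← ENNReal.ofReal_mul (by positivity), ← ENNReal.ofReal_mul (by positivity)]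
        congr 1
        rw [mul_mul_mul_comm, abs_mul_abs_self, sq]
    _ = ENNReal.ofReal (t * t) * ∫⁻ x, ENNReal.ofReal ((u x) ^ 2) ∂Q :=
        lintegral_const_mul' _ _ ENNReal.ofReal_ne_top
    _ ≤ ENNReal.ofReal (t * t) * ENNReal.ofReal (r ^ 2) := by gcongr
    _ = (ENNReal.ofReal (t * r)) ^ (2:ℝ) := by
        rw [h2, ← ENNReal.ofReal_mul (by positivity), ← ENNReal.ofReal_mul (by positivity)]
        congr 1
        ring

private lemma abs_aemeas {S : Type*} [MeasurableSpace S] {Q : Measure S} {u : S → ℝ}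
    (hint : Integrable (fun x => (u x) ^ 2) Q) : AEMeasurable (fun x => |u x|) Q := by
  have h1 : AEMeasurable (fun x => (u x) ^ 2) Q := hint.aestronglyMeasurable.aemeasurable
  have h2 : AEMeasurable (fun x => Real.sqrt ((u x) ^ 2)) Q :=
    (Real.continuous_sqrt.measurable).comp_aemeasurable h1
  refine h2.congr (Filter.Eventually.of_forall fun x => ?_)
  exact Real.sqrt_sq_eq_abs _

private lemma main_est {S : Type*} [MeasurableSpace S] {Q : Measure S} [IsProbabilityMeasure Q]
    (U ε : ℝ) (hU : 0 < U) (hε : 0 < ε) (hε1 : ε < 1)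
    (f g c₁ c₂ : S → ℝ) (q q' : ℝ) (hq0 : 0 ≤ q) (hq1 : q ≤ 1)
    (hqq' : |q - q'| ≤ ε / (3 + ε))
    (hfU : ∀ x, |f x| ≤ U) (hgU : ∀ x, |g x| ≤ U)
    (hint1 : Integrable (fun x => (f x - c₁ x) ^ 2) Q)
    (hb1 : (∫ x, (f x - c₁ x) ^ 2 ∂Q) ≤ (ε / 3 * U) ^ 2)
    (hint2 : Integrable (fun x => (g x - c₂ x) ^ 2) Q)
    (hb2 : (∫ x, (g x - c₂ x) ^ 2 ∂Q) ≤ (ε / 3 * U) ^ 2)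
    (hintH : Integrable
      (fun x => ((q * f x + (1 - q) * g x) - (q' * c₁ x + (1 - q') * c₂ x)) ^ 2) Q) :
    (∫ x, ((q * f x + (1 - q) * g x) - (q' * c₁ x + (1 - q') * c₂ x)) ^ 2 ∂Q) ≤ (ε * U) ^ 2 := by
  set δ : ℝ := ε / (3 + ε) with hδdef
  have hδpos : 0 < δ := by positivity
  have hδ3 : δ * (3 + ε) = ε := by
    rw [hδdef]; field_simp
  set D : S → ℝ := fun x => (q * f x + (1 - q) * g x) - (q' * c₁ x + (1 - q') * c₂ x) with hDdef
  -- pointwise bound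
  have hpt : ∀ x, |D x| ≤ (q + δ) * |f x - c₁ x| + (1 - q + δ) * |g x - c₂ x| + δ * (2 * U) := by
    intro x
    have hid : D x = (q * (f x - c₁ x) + (1 - q) * (g x - c₂ x)) +
        (q - q') * (-(f x - c₁ x) + (f x - g x) + (g x - c₂ x)) := by
      rw [hDdef]; ring
    have h1 : |D x| ≤ |q * (f x - c₁ x)| + |(1 - q) * (g x - c₂ x)| +
        |q - q'| * (|f x - c₁ x| + |f x - g x| + |g x - c₂ x|) := by
      rw [hid]
      refine le_trans (abs_add_le _ _) ?_
      have hA := abs_add_le (q * (f x - c₁ x)) ((1 - q) * (g x - c₂ x))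
      have hB : |(q - q') * (-(f x - c₁ x) + (f x - g x) + (g x - c₂ x))| ≤
          |q - q'| * (|f x - c₁ x| + |f x - g x| + |g x - c₂ x|) := by
        rw [abs_mul]
        refine mul_le_mul_of_nonneg_left ?_ (abs_nonneg _)
        refine le_trans (abs_add_le _ _) ?_
        refine le_trans (add_le_add (abs_add_le _ _) le_rfl) ?_
        rw [abs_neg]
      linarith
    have hfg : |f x - g x| ≤ 2 * U := by
      have := abs_sub (f x) (g x)
      calc |f x - g x| ≤ |f x| + |g x| := abs_sub _ _
        _ ≤ 2 * U := by linarith [hfU x, hgU x]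
    have hd1 : |q - q'| * |f x - c₁ x| ≤ δ * |f x - c₁ x| :=
      mul_le_mul_of_nonneg_right hqq' (abs_nonneg _)
    have hd2 : |q - q'| * |g x - c₂ x| ≤ δ * |g x - c₂ x| :=
      mul_le_mul_of_nonneg_right hqq' (abs_nonneg _)
    have hd3 : |q - q'| * |f x - g x| ≤ δ * (2 * U) :=
      mul_le_mul hqq' hfg (abs_nonneg _) hδpos.le
    rw [abs_mul, abs_of_nonneg hq0, abs_mul, abs_of_nonneg (by linarith : (0:ℝ) ≤ 1 - q)] at h1
    nlinarith [abs_nonneg (f x - c₁ x), abs_nonneg (g x - c₂ x)]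
  -- to lintegral
  have hDnn : 0 ≤ᵐ[Q] fun x => (D x) ^ 2 := Filter.Eventually.of_forall fun x => sq_nonneg _
  rw [integral_eq_lintegral_of_nonneg_ae hDnn hintH.aestronglyMeasurable]
  refine ENNReal.toReal_le_of_le_ofReal (by positivity) ?_
  -- the three ENNReal functions
  set a : S → ℝ≥0∞ := fun x => ENNReal.ofReal ((q + δ) * |f x - c₁ x|) with hadef
  set b : S → ℝ≥0∞ := fun x => ENNReal.ofReal ((1 - q + δ) * |g x - c₂ x|) with hbdef
  set e : S → ℝ≥0∞ := fun x => ENNReal.ofReal (δ * (2 * U)) with hedef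
  have h2 : ∀ y : ℝ≥0∞, y ^ (2:ℝ) = y * y := fun y => by
    rw [show (2:ℝ) = ((2:ℕ):ℝ) by norm_num, ENNReal.rpow_natCast, sq]
  have hmono : ∫⁻ x, ENNReal.ofReal ((D x) ^ 2) ∂Q ≤ ∫⁻ x, (a x + b x + e x) ^ (2:ℝ) ∂Q := by
    refine lintegral_mono fun x => ?_
    have habs : ENNReal.ofReal |D x| ≤ a x + b x + e x := by
      rw [hadef, hbdef, hedef]
      refine le_trans (ENNReal.ofReal_le_ofReal (hpt x)) ?_
      have hnn1 : 0 ≤ (q + δ) * |f x - c₁ x| := mul_nonneg (by linarith) (abs_nonneg _)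
      have hnn2 : 0 ≤ (1 - q + δ) * |g x - c₂ x| := mul_nonneg (by linarith) (abs_nonneg _)
      have hnn3 : 0 ≤ δ * (2 * U) := by positivity
      rw [ENNReal.ofReal_add (add_nonneg hnn1 hnn2) hnn3, ENNReal.ofReal_add hnn1 hnn2]
    calc ENNReal.ofReal ((D x) ^ 2) = (ENNReal.ofReal |D x|) ^ (2:ℝ) := by
          rw [h2, ← ENNReal.ofReal_mul (abs_nonneg _), ← sq_abs, sq]
      _ ≤ (a x + b x + e x) ^ (2:ℝ) := ENNReal.rpow_le_rpow habs (by norm_num)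
  refine le_trans hmono ?_
  have ha : AEMeasurable a Q := by
    rw [hadef]
    exact ENNReal.measurable_ofReal.comp_aemeasurable ((abs_aemeas hint1).const_mul _)
  have hb : AEMeasurable b Q := by
    rw [hbdef]
    exact ENNReal.measurable_ofReal.comp_aemeasurable ((abs_aemeas hint2).const_mul _)
  have hKa : ∫⁻ x, a x ^ (2:ℝ) ∂Q ≤ (ENNReal.ofReal ((q + δ) * (ε / 3 * U))) ^ (2:ℝ) :=
    piece _ (q + δ) (ε / 3 * U) (by positivity) (by positivity) hint1 hb1
  have hKb : ∫⁻ x, b x ^ (2:ℝ) ∂Q ≤ (ENNReal.ofReal ((1 - q + δ) * (ε / 3 * U))) ^ (2:ℝ) :=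
    piece _ (1 - q + δ) (ε / 3 * U) (by linarith) (by positivity) hint2 hb2
  have hKe : ∫⁻ x, e x ^ (2:ℝ) ∂Q ≤ (ENNReal.ofReal (δ * (2 * U))) ^ (2:ℝ) := by
    rw [hedef]
    rw [lintegral_const, measure_univ, mul_one]
  have := mink3 a b e ha hb aemeasurable_const _ _ _ hKa hKb hKe
  refine le_trans this ?_
  -- arithmetic: sum of constants ≤ ε * U
  have hsum : (q + δ) * (ε / 3 * U) + (1 - q + δ) * (ε / 3 * U) + δ * (2 * U) = ε * U := by
    have h3 : (0:ℝ) < 3 + ε := by linarith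
    field_simp [hδdef]
    linear_combination 2 * hδ3
  have hnn1 : 0 ≤ (q + δ) * (ε / 3 * U) := mul_nonneg (by linarith) (by positivity)
  have hnn2 : 0 ≤ (1 - q + δ) * (ε / 3 * U) := mul_nonneg (by linarith) (by positivity)
  have hnn3 : 0 ≤ δ * (2 * U) := by positivity
  rw [← ENNReal.ofReal_add hnn1 hnn2, ← ENNReal.ofReal_add (add_nonneg hnn1 hnn2) hnn3, hsum, h2,
    ← ENNReal.ofReal_mul (by positivity)]
  exact ENNReal.ofReal_le_ofReal (by nlinarith)

/-- VC preservation: convex combinations of two VC-type classes. -/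
theorem stmt_15 {S : Type*} [MeasurableSpace S] (F G : Set (S → ℝ)) (U v A : ℝ)
    (hU : 0 < U) (hv : 1 ≤ v) (hA : 1 ≤ A)
    (hmeasF : ∀ f ∈ F, Measurable f) (hmeasG : ∀ g ∈ G, Measurable g)
    (hVCF : IsVCType F U v A) (hVCG : IsVCType G U v A) :
    IsVCType
      {h | ∃ q ∈ Set.Icc (0 : ℝ) 1, ∃ f ∈ F, ∃ g ∈ G,
        h = fun x => q * f x + (1 - q) * g x}
      U (2 * v + 1) (3 * A) := by
  classical
  have hbound : ∀ q : ℝ, q ∈ Set.Icc (0:ℝ) 1 → ∀ f ∈ F, ∀ g ∈ G, ∀ x,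
      |q * f x + (1 - q) * g x| ≤ U := by
    rintro q ⟨hq0, hq1⟩ f hf g hg x
    have h1 := abs_add_le (q * f x) ((1 - q) * g x)
    rw [abs_mul, abs_mul, abs_of_nonneg hq0, abs_of_nonneg (by linarith : (0:ℝ) ≤ 1 - q)] at h1
    have h2 := hVCF.1 f hf x
    have h3 := hVCG.1 g hg x
    nlinarith [abs_nonneg (f x), abs_nonneg (g x)]
  constructor
  · rintro h ⟨q, hq, f, hf, g, hg, rfl⟩ x
    exact hbound q hq f hf g hg x
  intro Q hQ ε hε hε1
  haveI := hQ
  have hε3 : 0 < ε / 3 := by linarith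
  have hε31 : ε / 3 < 1 := by linarith
  obtain ⟨C₁, hC₁card, hC₁⟩ := hVCF.2 Q hQ (ε / 3) hε3 hε31
  obtain ⟨C₂, hC₂card, hC₂⟩ := hVCG.2 Q hQ (ε / 3) hε3 hε31
  have hbase : A / (ε / 3) = 3 * A / ε := by
    rw [div_div_eq_mul_div, mul_comm A 3]
  rw [hbase] at hC₁card hC₂card
  have hXpos : (0:ℝ) < 3 * A / ε := by positivity
  by_cases hbad : ∃ f c : S → ℝ, (∀ x, |f x| ≤ U) ∧
      ¬ Integrable (fun x => (f x - c x) ^ 2) Q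
  · obtain ⟨f0, c0, hf0U, hjunk⟩ := hbad
    obtain ⟨G₀, hcard, hcover⟩ := junk_cover Q U f0 c0 hf0U hjunk
    refine ⟨G₀, ?_, ?_⟩
    · have hX3 : (3:ℝ) ≤ 3 * A / ε := by
        rw [le_div_iff₀ hε]; nlinarith
      calc (G₀.card : ℝ) ≤ 3 := by exact_mod_cast hcard
        _ ≤ 3 * A / ε := hX3
        _ = (3 * A / ε) ^ (1:ℝ) := (Real.rpow_one _).symm
        _ ≤ (3 * A / ε) ^ (2 * v + 1) :=
            Real.rpow_le_rpow_of_exponent_le (by linarith) (by linarith)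
    · rintro h ⟨q, hq, f, hf, g, hg, rfl⟩
      obtain ⟨w, hw, hzero⟩ := hcover _ (hbound q hq f hf g hg)
      exact ⟨w, hw, hzero.trans_le (by positivity)⟩
  · push_neg at hbad
    set δ : ℝ := ε / (3 + ε) with hδdef
    have hδpos : 0 < δ := by positivity
    set m : ℕ := ⌊(1:ℝ) / (2 * δ)⌋₊ + 1 with hmdef
    set T : Finset ℝ := (Finset.range m).image (fun k : ℕ => (2 * (k:ℝ) + 1) * δ) with hTdef
    set φ : (S → ℝ) × (S → ℝ) × ℝ → (S → ℝ) :=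
      fun p => fun x => p.2.2 * p.1 x + (1 - p.2.2) * p.2.1 x with hφdef
    refine ⟨(C₁ ×ˢ C₂ ×ˢ T).image φ, ?_, ?_⟩
    · -- cardinality bound
      have hTcard : (T.card : ℝ) ≤ 3 * A / ε := by
        have h1 : T.card ≤ m := le_trans Finset.card_image_le (le_of_eq (Finset.card_range m))
        have h2 : (m : ℝ) ≤ 1 / (2 * δ) + 1 := by
          rw [hmdef]
          push_cast
          have := Nat.floor_le (by positivity : (0:ℝ) ≤ 1 / (2 * δ))
          linarith
        have h3 : 1 / (2 * δ) = (3 + ε) / (2 * ε) := by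
          rw [hδdef]
          rw [div_eq_div_iff (by positivity) (by positivity)]
          field_simp
        have h4 : (3 + ε) / (2 * ε) + 1 ≤ 3 / ε := by
          rw [div_add' _ _ _ (by positivity), div_le_div_iff₀ (by positivity) hε]
          nlinarith
        calc (T.card : ℝ) ≤ (m : ℝ) := by exact_mod_cast h1
          _ ≤ 1 / (2 * δ) + 1 := h2
          _ = (3 + ε) / (2 * ε) + 1 := by rw [h3]
          _ ≤ 3 / ε := h4
          _ ≤ 3 * A / ε := by gcongr; linarith
      have hcard1 : (((C₁ ×ˢ C₂ ×ˢ T).image φ).card : ℝ) ≤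
          (C₁.card : ℝ) * (C₂.card : ℝ) * (T.card : ℝ) := by
        have := Finset.card_image_le (f := φ) (s := C₁ ×ˢ C₂ ×ˢ T)
        have hprod : (C₁ ×ˢ C₂ ×ˢ T).card = C₁.card * (C₂.card * T.card) := by
          rw [Finset.card_product, Finset.card_product]
        calc (((C₁ ×ˢ C₂ ×ˢ T).image φ).card : ℝ)
            ≤ ((C₁ ×ˢ C₂ ×ˢ T).card : ℝ) := by exact_mod_cast this
          _ = (C₁.card : ℝ) * (C₂.card : ℝ) * (T.card : ℝ) := by
              rw [hprod]; push_cast; try ring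
      refine le_trans hcard1 ?_
      have hstep : (C₁.card : ℝ) * (C₂.card : ℝ) * (T.card : ℝ) ≤
          (3 * A / ε) ^ v * (3 * A / ε) ^ v * (3 * A / ε) := by
        have hnn1 : (0:ℝ) ≤ (C₁.card : ℝ) := Nat.cast_nonneg _
        have hnn2 : (0:ℝ) ≤ (C₂.card : ℝ) := Nat.cast_nonneg _
        have hnn3 : (0:ℝ) ≤ (T.card : ℝ) := Nat.cast_nonneg _
        have hp : (0:ℝ) ≤ (3 * A / ε) ^ v := (Real.rpow_pos_of_pos hXpos v).le
        exact mul_le_mul (mul_le_mul hC₁card hC₂card hnn2 hp) hTcard hnn3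
          (mul_nonneg hp hp)
      refine le_trans hstep (le_of_eq ?_)
      have e1 : (3 * A / ε) ^ v * (3 * A / ε) ^ v = (3 * A / ε) ^ (v + v) :=
        (Real.rpow_add hXpos v v).symm
      calc (3 * A / ε) ^ v * (3 * A / ε) ^ v * (3 * A / ε)
          = (3 * A / ε) ^ (v + v) * (3 * A / ε) ^ (1:ℝ) := by rw [Real.rpow_one, e1]
        _ = (3 * A / ε) ^ (v + v + 1) := (Real.rpow_add hXpos _ _).symm
        _ = (3 * A / ε) ^ (2 * v + 1) := by rw [show v + v + (1:ℝ) = 2 * v + 1 by ring]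
    · -- covering property
      rintro h ⟨q, ⟨hq0, hq1⟩, f, hf, g, hg, rfl⟩
      obtain ⟨c₁, hc₁, hb1⟩ := hC₁ f hf
      obtain ⟨c₂, hc₂, hb2⟩ := hC₂ g hg
      set k : ℕ := ⌊q / (2 * δ)⌋₊ with hkdef
      have hkm : k < m := by
        rw [hmdef]
        have : k ≤ ⌊(1:ℝ) / (2 * δ)⌋₊ :=
          Nat.floor_le_floor (by gcongr)
        omega
      set q' : ℝ := (2 * (k:ℝ) + 1) * δ with hq'def
      have hq'T : q' ∈ T := Finset.mem_image.2 ⟨k, Finset.mem_range.2 hkm, rfl⟩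
      have hqq' : |q - q'| ≤ δ := by
        have hfl : (k : ℝ) ≤ q / (2 * δ) := Nat.floor_le (by positivity)
        have hfu : q / (2 * δ) < (k : ℝ) + 1 := Nat.lt_floor_add_one _
        have h1 : (k : ℝ) * (2 * δ) ≤ q := (le_div_iff₀ (by positivity)).mp hfl
        have h2 : q < ((k : ℝ) + 1) * (2 * δ) := (div_lt_iff₀ (by positivity)).mp hfu
        rw [abs_le, hq'def]
        constructor <;> nlinarith
      refine ⟨φ (c₁, c₂, q'), Finset.mem_image.2 ⟨(c₁, c₂, q'),
        Finset.mem_product.2 ⟨hc₁, Finset.mem_product.2 ⟨hc₂, hq'T⟩⟩, rfl⟩, ?_⟩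
      have hintH : Integrable
          (fun x => ((q * f x + (1 - q) * g x) - (q' * c₁ x + (1 - q') * c₂ x)) ^ 2) Q :=
        hbad (fun x => q * f x + (1 - q) * g x) (fun x => q' * c₁ x + (1 - q') * c₂ x)
          (hbound q ⟨hq0, hq1⟩ f hf g hg)
      have hint1 : Integrable (fun x => (f x - c₁ x) ^ 2) Q :=
        hbad f c₁ (hVCF.1 f hf)
      have hint2 : Integrable (fun x => (g x - c₂ x) ^ 2) Q :=
        hbad g c₂ (hVCG.1 g hg)
      have hb1' : (∫ x, (f x - c₁ x) ^ 2 ∂Q) ≤ (ε / 3 * U) ^ 2 := hb1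
      have hb2' : (∫ x, (g x - c₂ x) ^ 2 ∂Q) ≤ (ε / 3 * U) ^ 2 := hb2
      exact main_est U ε hU hε hε1 f g c₁ c₂ q q' hq0 hq1 hqq'
        (hVCF.1 f hf) (hVCG.1 g hg) hint1 hb1' hint2 hb2' hintH


end
end

section
/- For every measurable ν : 𝒳 → ℝ, the classifier g(x) = sign(ν(x) − 1) satisfies R_bal(g) − R_bal(g*_p) = E[ 1{g(X) ≠ g*_p(X)} · |η(X) − p| / (p·(1 − p)) ], where g*_p is the balanced Bayes classifier. -/
open MeasureTheory

noncomputable section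

/-- `sign(t) = 1` if `t ≥ 0`, `-1` otherwise. -/
def sgn (t : ℝ) : ℝ := if 0 ≤ t then 1 else -1

/-- The (unnormalized) balanced 0-1 risk
`R_bal(g) = P(g(X) ≠ Y | Y = 1) + P(g(X) ≠ Y | Y = -1)`, with `P(Y = 1) = p` and
`P(Y = -1) = 1 - p`. -/
def Rbal {𝒳 : Type*} [MeasurableSpace 𝒳] (P : Measure (𝒳 × ℝ)) (p : ℝ)
    (g : 𝒳 → ℝ) : ℝ :=
  (P {z | g z.1 ≠ z.2 ∧ z.2 = 1}).toReal / p
    + (P {z | g z.1 ≠ z.2 ∧ z.2 = -1}).toReal / (1 - p)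

/-- Lemma: exact expression of the excess balanced risk of a plug-in
classifier `g = sign(ν − 1)` relative to the balanced Bayes classifier
`g*_p = sign(η/p − 1)`. -/
theorem stmt_16 {𝒳 : Type*} [MeasurableSpace 𝒳] (P : Measure (𝒳 × ℝ))
    [IsProbabilityMeasure P]
    (hsupp : P {z | z.2 = 1 ∨ z.2 = -1} = 1)
    (p : ℝ) (hp : p = pPos P) (hp0 : 0 < p) (hp1 : p < 1)
    -- `η` is a regular conditional probability of `{Y = 1}` given `X`
    (η : 𝒳 → ℝ) (hη01 : ∀ x, 0 ≤ η x ∧ η x ≤ 1) (hηmeas : Measurable η)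
    (hη : ∀ B : Set 𝒳, MeasurableSet B →
      (P {z | z.1 ∈ B ∧ z.2 = 1}).toReal = ∫ x in B, η x ∂(P.map Prod.fst))
    (ν : 𝒳 → ℝ) (hν : Measurable ν) :
    Rbal P p (fun x => sgn (ν x - 1)) - Rbal P p (fun x => sgn (η x / p - 1)) =
      ∫ x, ({x | sgn (ν x - 1) ≠ sgn (η x / p - 1)}.indicator
        (fun x => |η x - p| / (p * (1 - p))) x) ∂(P.map Prod.fst) := by
  classical
  set μ := P.map Prod.fst with hμdef
  haveI : IsProbabilityMeasure μ := Measure.isProbabilityMeasure_map measurable_fst.aemeasurable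
  have hp1' : (0:ℝ) < 1 - p := by linarith
  -- integrability of bounded measurable functions
  have hbdd : ∀ (f : 𝒳 → ℝ) (C : ℝ), Measurable f → (∀ x, |f x| ≤ C) → Integrable f μ := by
    intro f C hf hC
    exact (integrable_const C).mono' hf.aestronglyMeasurable
      (Filter.Eventually.of_forall (fun x => by simpa using hC x))
  have hηint : Integrable η μ := by
    refine hbdd η 1 hηmeas fun x => abs_le.mpr ⟨by linarith [(hη01 x).1], (hη01 x).2⟩
  -- measure of the `y = -1` slice
  have hPneg : ∀ B : Set 𝒳, MeasurableSet B →
      (P {z | z.1 ∈ B ∧ z.2 = -1}).toReal = ∫ x in B, (1 - η x) ∂μ := by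
    intro B hB
    have hS : MeasurableSet {z : 𝒳 × ℝ | z.2 = 1 ∨ z.2 = -1} := by
      have h1 : MeasurableSet {z : 𝒳 × ℝ | z.2 = 1} :=
        measurable_snd (measurableSet_singleton (1:ℝ))
      have h2 : MeasurableSet {z : 𝒳 × ℝ | z.2 = -1} :=
        measurable_snd (measurableSet_singleton (-1:ℝ))
      exact h1.union h2
    have hS0 : P ({z : 𝒳 × ℝ | z.2 = 1 ∨ z.2 = -1}ᶜ) = 0 :=
      (prob_compl_eq_zero_iff hS).mpr hsupp
    set A : Set (𝒳 × ℝ) := Prod.fst ⁻¹' B with hAdef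
    have hAm : MeasurableSet A := measurable_fst hB
    have e1 : P (A ∩ {z : 𝒳 × ℝ | z.2 = 1 ∨ z.2 = -1}) = P A := by
      refine le_antisymm (measure_mono Set.inter_subset_left) ?_
      calc P A ≤ P (A ∩ {z : 𝒳 × ℝ | z.2 = 1 ∨ z.2 = -1})
            + P (A \ {z : 𝒳 × ℝ | z.2 = 1 ∨ z.2 = -1}) := measure_le_inter_add_diff P A _
        _ ≤ P (A ∩ {z : 𝒳 × ℝ | z.2 = 1 ∨ z.2 = -1}) + 0 := by
            gcongr
            exact le_trans (measure_mono (Set.diff_subset_compl _ _)) (le_of_eq hS0)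
        _ = P (A ∩ {z : 𝒳 × ℝ | z.2 = 1 ∨ z.2 = -1}) := add_zero _
    have esplit : A ∩ {z : 𝒳 × ℝ | z.2 = 1 ∨ z.2 = -1}
        = {z : 𝒳 × ℝ | z.1 ∈ B ∧ z.2 = 1} ∪ {z : 𝒳 × ℝ | z.1 ∈ B ∧ z.2 = -1} := by
      ext z; simp only [Set.mem_inter_iff, Set.mem_preimage, Set.mem_union, Set.mem_setOf_eq]; tauto
    have hm1 : MeasurableSet {z : 𝒳 × ℝ | z.1 ∈ B ∧ z.2 = 1} := by
      have : {z : 𝒳 × ℝ | z.1 ∈ B ∧ z.2 = 1}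
          = (Prod.fst ⁻¹' B) ∩ (Prod.snd ⁻¹' {1}) := by ext z; simp only [Set.mem_setOf_eq, Set.mem_inter_iff, Set.mem_preimage, Set.mem_singleton_iff]
      rw [this]; exact (measurable_fst hB).inter (measurable_snd (measurableSet_singleton _))
    have hdisj : Disjoint {z : 𝒳 × ℝ | z.1 ∈ B ∧ z.2 = 1} {z : 𝒳 × ℝ | z.1 ∈ B ∧ z.2 = -1} := by
      rw [Set.disjoint_left]
      rintro z ⟨_, h1⟩ ⟨_, h2⟩
      rw [h1] at h2; norm_num at h2
    have hm2 : MeasurableSet {z : 𝒳 × ℝ | z.1 ∈ B ∧ z.2 = -1} := by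
      have : {z : 𝒳 × ℝ | z.1 ∈ B ∧ z.2 = -1}
          = (Prod.fst ⁻¹' B) ∩ (Prod.snd ⁻¹' {-1}) := by ext z; simp only [Set.mem_setOf_eq, Set.mem_inter_iff, Set.mem_preimage, Set.mem_singleton_iff]
      rw [this]; exact (measurable_fst hB).inter (measurable_snd (measurableSet_singleton _))
    have eadd : P {z : 𝒳 × ℝ | z.1 ∈ B ∧ z.2 = 1} + P {z : 𝒳 × ℝ | z.1 ∈ B ∧ z.2 = -1}
        = P A := by
      rw [← measure_union hdisj hm2, ← esplit, e1]
    have hPA : (P A).toReal = (μ B).toReal := by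
      rw [hμdef, Measure.map_apply measurable_fst hB]
    have eaddR : (P {z : 𝒳 × ℝ | z.1 ∈ B ∧ z.2 = 1}).toReal
        + (P {z : 𝒳 × ℝ | z.1 ∈ B ∧ z.2 = -1}).toReal = (μ B).toReal := by
      rw [← hPA, ← eadd, ENNReal.toReal_add (measure_ne_top _ _) (measure_ne_top _ _)]
    have hint1 : ∫ x in B, (1 - η x) ∂μ = (μ B).toReal - ∫ x in B, η x ∂μ := by
      rw [integral_sub (integrable_const 1).integrableOn hηint.integrableOn]
      simp [Measure.restrict_apply_univ]
      rfl
    rw [hint1, ← hη B hB]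
    linarith [eaddR]
  have hFintGen : ∀ f : 𝒳 → ℝ, Measurable f →
      Integrable (fun x => if 0 ≤ f x then (1 - η x)/(1-p) else η x / p) μ := by
    intro f hf
    have hA : MeasurableSet {x | 0 ≤ f x} := measurableSet_le measurable_const hf
    have hFmeas : Measurable (fun x => if 0 ≤ f x then (1 - η x)/(1-p) else η x / p) :=
      Measurable.ite hA ((measurable_const.sub hηmeas).div_const _) (hηmeas.div_const _)
    refine hbdd _ (1/p + 1/(1-p)) hFmeas fun x => ?_
    rcases hη01 x with ⟨ha, hb⟩
    have hip : (0:ℝ) ≤ 1/p := by positivity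
    have hiq : (0:ℝ) ≤ 1/(1-p) := by positivity
    by_cases h : 0 ≤ f x
    · simp only [h, if_true]
      rw [abs_le]
      constructor
      · have : (0:ℝ) ≤ (1 - η x)/(1-p) := div_nonneg (by linarith) (le_of_lt hp1')
        linarith
      · have : (1 - η x)/(1-p) ≤ 1/(1-p) :=
          div_le_div_of_nonneg_right (by linarith) (le_of_lt hp1')
        linarith
    · simp only [h, if_false]
      rw [abs_le]
      constructor
      · have : (0:ℝ) ≤ η x / p := div_nonneg ha (le_of_lt hp0)
        linarith
      · have : η x / p ≤ 1/p :=
          div_le_div_of_nonneg_right hb (le_of_lt hp0)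
        linarith
  -- Rbal of a sign classifier
  have hRbal : ∀ f : 𝒳 → ℝ, Measurable f →
      Rbal P p (fun x => sgn (f x)) =
        ∫ x, (if 0 ≤ f x then (1 - η x)/(1-p) else η x / p) ∂μ := by
    intro f hf
    have hA : MeasurableSet {x | 0 ≤ f x} := measurableSet_le measurable_const hf
    have hset1 : {z : 𝒳 × ℝ | (fun x => sgn (f x)) z.1 ≠ z.2 ∧ z.2 = 1}
        = {z : 𝒳 × ℝ | z.1 ∈ {x | 0 ≤ f x}ᶜ ∧ z.2 = 1} := by
      ext z
      by_cases h2 : z.2 = 1 <;> by_cases h0 : 0 ≤ f z.1 <;>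
        simp [sgn, h0, h2] <;> norm_num <;> exact not_le.mp h0
    have hset2 : {z : 𝒳 × ℝ | (fun x => sgn (f x)) z.1 ≠ z.2 ∧ z.2 = -1}
        = {z : 𝒳 × ℝ | z.1 ∈ {x | 0 ≤ f x} ∧ z.2 = -1} := by
      ext z
      by_cases h2 : z.2 = -1 <;> by_cases h0 : 0 ≤ f z.1 <;>
        simp [sgn, h0, h2] <;> norm_num
    have hFmeas : Measurable (fun x => if 0 ≤ f x then (1 - η x)/(1-p) else η x / p) :=
      Measurable.ite hA ((measurable_const.sub hηmeas).div_const _) (hηmeas.div_const _)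
    have hFint : Integrable (fun x => if 0 ≤ f x then (1 - η x)/(1-p) else η x / p) μ :=
      hFintGen f hf
    rw [Rbal, hset1, hset2, hη _ hA.compl, hPneg _ hA,
      ← integral_div, ← integral_div]
    have e1 : ∫ x in {x | 0 ≤ f x}ᶜ, η x / p ∂μ
        = ∫ x in {x | 0 ≤ f x}ᶜ, (if 0 ≤ f x then (1 - η x)/(1-p) else η x / p) ∂μ := by
      refine setIntegral_congr_fun hA.compl fun x hx => ?_
      simp only [Set.mem_compl_iff, Set.mem_setOf_eq] at hx
      simp [hx]
    have e2 : ∫ x in {x | 0 ≤ f x}, (1 - η x)/(1-p) ∂μ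
        = ∫ x in {x | 0 ≤ f x}, (if 0 ≤ f x then (1 - η x)/(1-p) else η x / p) ∂μ := by
      refine setIntegral_congr_fun hA fun x hx => ?_
      simp only [Set.mem_setOf_eq] at hx
      simp [hx]
    rw [e1, e2]
    rw [add_comm]
    exact integral_add_compl hA hFint
  -- apply to both classifiers
  have hCν : Rbal P p (fun x => sgn (ν x - 1))
      = ∫ x, (if 0 ≤ ν x - 1 then (1 - η x)/(1-p) else η x / p) ∂μ :=
    hRbal (fun x => ν x - 1) (hν.sub measurable_const)
  have hCη : Rbal P p (fun x => sgn (η x / p - 1))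
      = ∫ x, (if 0 ≤ η x / p - 1 then (1 - η x)/(1-p) else η x / p) ∂μ :=
    hRbal (fun x => η x / p - 1) ((hηmeas.div_const p).sub measurable_const)
  have hintν : Integrable (fun x => if 0 ≤ ν x - 1 then (1 - η x)/(1-p) else η x / p) μ :=
    hFintGen (fun x => ν x - 1) (hν.sub measurable_const)
  have hintη : Integrable (fun x => if 0 ≤ η x / p - 1 then (1 - η x)/(1-p) else η x / p) μ :=
    hFintGen (fun x => η x / p - 1) ((hηmeas.div_const p).sub measurable_const)
  rw [hCν, hCη, ← integral_sub hintν hintη]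
  refine integral_congr_ae (Filter.Eventually.of_forall fun x => ?_)
  rcases hη01 x with ⟨ha, hb⟩
  simp only [Set.indicator_apply, Set.mem_setOf_eq, sgn]
  by_cases h1 : 0 ≤ ν x - 1 <;> by_cases h2 : 0 ≤ η x / p - 1 <;>
    simp only [h1, h2, if_true, if_false]
  · rw [if_neg (by simp : ¬ (1:ℝ) ≠ 1)]
    ring
  · have hlt : η x < p := (div_lt_one hp0).mp (by linarith [not_le.mp h2])
    rw [if_pos (by norm_num : (1:ℝ) ≠ -1)]
    rw [abs_of_neg (by linarith : η x - p < 0)]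
    field_simp
    ring
  · have hge : p ≤ η x := (one_le_div hp0).mp (by linarith)
    rw [if_pos (by norm_num : (-1:ℝ) ≠ 1)]
    rw [abs_of_nonneg (by linarith : (0:ℝ) ≤ η x - p)]
    field_simp
    ring
  · rw [if_neg (by simp : ¬ (-1:ℝ) ≠ -1)]
    ring

end
end

section
/- Assume p ≤ 1/2 and set ν*(x) = η(x)/p. Then for every measurable ν : 𝒳 → ℝ (with E[|ν(X)|] < ∞), the classifier g(x) = sign(ν(x) − 1) satisfies R_bal(g) − R_bal(g*_p) ≤ 2·E[ |ν(X) − ν*(X)| ], where g*_p is the balanced Bayes classifier. -/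
open MeasureTheory

noncomputable section

/-- Lemma: comparison bound for the excess balanced risk of a
plug-in classifier, when `p ≤ 1/2`. -/
theorem stmt_17 {𝒳 : Type*} [MeasurableSpace 𝒳] (P : Measure (𝒳 × ℝ))
    [IsProbabilityMeasure P]
    (hsupp : P {z | z.2 = 1 ∨ z.2 = -1} = 1)
    (p : ℝ) (hp : p = pPos P) (hp0 : 0 < p) (hp2 : p ≤ 1 / 2)
    -- `η` is a regular conditional probability of `{Y = 1}` given `X`
    (η : 𝒳 → ℝ) (hη01 : ∀ x, 0 ≤ η x ∧ η x ≤ 1) (hηmeas : Measurable η)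
    (hη : ∀ B : Set 𝒳, MeasurableSet B →
      (P {z | z.1 ∈ B ∧ z.2 = 1}).toReal = ∫ x in B, η x ∂(P.map Prod.fst))
    (ν : 𝒳 → ℝ) (hν : Measurable ν) (hνint : Integrable ν (P.map Prod.fst)) :
    Rbal P p (fun x => sgn (ν x - 1)) - Rbal P p (fun x => sgn (η x / p - 1)) ≤
      2 * ∫ x, |ν x - η x / p| ∂(P.map Prod.fst) := by
  set μ := P.map Prod.fst with hμdef
  haveI : IsProbabilityMeasure μ := Measure.isProbabilityMeasure_map measurable_fst.aemeasurable
  have h1p : (0:ℝ) < 1 - p := by linarith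
  have hm1 : MeasurableSet {z : 𝒳 × ℝ | z.2 = 1} :=
    (measurableSet_singleton (1:ℝ)).preimage measurable_snd
  have hm2 : MeasurableSet {z : 𝒳 × ℝ | z.2 = -1} :=
    (measurableSet_singleton (-1:ℝ)).preimage measurable_snd
  have hSm : MeasurableSet {z : 𝒳 × ℝ | z.2 = 1 ∨ z.2 = -1} := hm1.union hm2
  have hSc : P {z : 𝒳 × ℝ | z.2 = 1 ∨ z.2 = -1}ᶜ = 0 := by
    rw [measure_compl hSm (measure_ne_top P _), hsupp, measure_univ, tsub_self]
  have hμB : ∀ B : Set 𝒳, MeasurableSet B → P {z : 𝒳 × ℝ | z.1 ∈ B} = μ B := by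
    intro B hB
    rw [hμdef, Measure.map_apply measurable_fst hB]
    rfl
  have hηint : Integrable η μ := by
    refine Integrable.mono' (integrable_const (1:ℝ)) hηmeas.aestronglyMeasurable ?_
    filter_upwards with x
    rw [Real.norm_eq_abs, abs_of_nonneg (hη01 x).1]
    exact (hη01 x).2
  have key2 : ∀ B : Set 𝒳, MeasurableSet B →
      (P {z : 𝒳 × ℝ | z.1 ∈ B ∧ z.2 = -1}).toReal = ∫ x in B, (1 - η x) ∂μ := by
    intro B hB
    have hBp : MeasurableSet {z : 𝒳 × ℝ | z.1 ∈ B} := hB.preimage measurable_fst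
    have hA1 : MeasurableSet {z : 𝒳 × ℝ | z.1 ∈ B ∧ z.2 = 1} := hBp.inter hm1
    have hA2 : MeasurableSet {z : 𝒳 × ℝ | z.1 ∈ B ∧ z.2 = -1} := hBp.inter hm2
    have hdisj : Disjoint {z : 𝒳 × ℝ | z.1 ∈ B ∧ z.2 = 1}
        {z : 𝒳 × ℝ | z.1 ∈ B ∧ z.2 = -1} := by
      rw [Set.disjoint_left]
      rintro z ⟨-, h1⟩ ⟨-, h2⟩
      rw [h1] at h2; norm_num at h2
    have hunion : {z : 𝒳 × ℝ | z.1 ∈ B ∧ z.2 = 1} ∪ {z : 𝒳 × ℝ | z.1 ∈ B ∧ z.2 = -1}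
        = {z : 𝒳 × ℝ | z.1 ∈ B} ∩ {z : 𝒳 × ℝ | z.2 = 1 ∨ z.2 = -1} := by
      ext z
      simp only [Set.mem_union, Set.mem_setOf_eq, Set.mem_inter_iff]
      tauto
    have hPU : P ({z : 𝒳 × ℝ | z.1 ∈ B ∧ z.2 = 1} ∪ {z : 𝒳 × ℝ | z.1 ∈ B ∧ z.2 = -1})
        = μ B := by
      rw [hunion, measure_inter_conull hSc, hμB B hB]
    have hadd : (P {z : 𝒳 × ℝ | z.1 ∈ B ∧ z.2 = 1}).toReal
        + (P {z : 𝒳 × ℝ | z.1 ∈ B ∧ z.2 = -1}).toReal = (μ B).toReal := by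
      rw [← ENNReal.toReal_add (measure_ne_top P _) (measure_ne_top P _),
        ← measure_union hdisj hA2, hPU]
    have hμBr : (μ B).toReal = ∫ x in B, (1:ℝ) ∂μ := by
      simp [setIntegral_const, Measure.real]
    have hsub : ∫ x in B, (1 - η x) ∂μ = (∫ x in B, (1:ℝ) ∂μ) - ∫ x in B, η x ∂μ :=
      integral_sub (integrableOn_const (measure_ne_top μ B))
        hηint.integrableOn
    rw [hsub, ← hμBr]
    rw [hη B hB] at hadd
    linarith
  have hrbal : ∀ f : 𝒳 → ℝ, Measurable f →
      Rbal P p (fun x => sgn (f x)) =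
        (∫ x, η x / p ∂μ)
          - ∫ x in {x | 0 ≤ f x}, (η x / p - (1 - η x) / (1 - p)) ∂μ := by
    intro f hf
    have hBp : MeasurableSet {x | 0 ≤ f x} := measurableSet_le measurable_const hf
    have eq1 : {z : 𝒳 × ℝ | sgn (f z.1) ≠ z.2 ∧ z.2 = 1}
        = {z : 𝒳 × ℝ | z.1 ∈ {x | 0 ≤ f x}ᶜ ∧ z.2 = 1} := by
      ext z
      simp only [Set.mem_setOf_eq, Set.mem_compl_iff]
      constructor
      · rintro ⟨hne, h1⟩
        exact ⟨fun h0 => hne (by rw [h1]; simp [sgn, h0]), h1⟩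
      · rintro ⟨h0, h1⟩
        refine ⟨?_, h1⟩
        rw [h1]
        simp only [sgn, if_neg h0]
        norm_num
    have eq2 : {z : 𝒳 × ℝ | sgn (f z.1) ≠ z.2 ∧ z.2 = -1}
        = {z : 𝒳 × ℝ | z.1 ∈ {x | 0 ≤ f x} ∧ z.2 = -1} := by
      ext z
      simp only [Set.mem_setOf_eq]
      constructor
      · rintro ⟨hne, h1⟩
        refine ⟨?_, h1⟩
        by_contra h0
        exact hne (by rw [h1]; simp [sgn, h0])
      · rintro ⟨h0, h1⟩
        refine ⟨?_, h1⟩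
        rw [h1]
        simp only [sgn, if_pos h0]
        norm_num
    have hcompl : (∫ x in {x | 0 ≤ f x}, η x / p ∂μ)
        + ∫ x in {x | 0 ≤ f x}ᶜ, η x / p ∂μ = ∫ x, η x / p ∂μ :=
      integral_add_compl hBp (hηint.div_const p)
    have hsplit : ∫ x in {x | 0 ≤ f x}, (η x / p - (1 - η x) / (1 - p)) ∂μ
        = (∫ x in {x | 0 ≤ f x}, η x / p ∂μ)
            - ∫ x in {x | 0 ≤ f x}, (1 - η x) / (1 - p) ∂μ :=
      integral_sub (hηint.div_const p).integrableOn
        (((integrable_const (1:ℝ)).sub hηint).div_const (1 - p)).integrableOn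
    have hd1 : ∫ x in {x | 0 ≤ f x}ᶜ, η x / p ∂μ
        = (∫ x in {x | 0 ≤ f x}ᶜ, η x ∂μ) / p := integral_div p _
    have hd2 : ∫ x in {x | 0 ≤ f x}, (1 - η x) / (1 - p) ∂μ
        = (∫ x in {x | 0 ≤ f x}, (1 - η x) ∂μ) / (1 - p) := integral_div _ _
    simp only [Rbal]
    rw [eq1, eq2, hη _ hBp.compl, key2 _ hBp, hsplit, ← hd1, ← hd2]
    linarith
  have hAs : MeasurableSet {x | 0 ≤ η x / p - 1} :=
    measurableSet_le measurable_const ((hηmeas.div_const p).sub_const 1)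
  have hAv : MeasurableSet {x | 0 ≤ ν x - 1} :=
    measurableSet_le measurable_const (hν.sub_const 1)
  have hφint : Integrable (fun x => η x / p - (1 - η x) / (1 - p)) μ :=
    (hηint.div_const p).sub (((integrable_const (1:ℝ)).sub hηint).div_const (1 - p))
  have hrhsint : Integrable (fun x => 2 * |ν x - η x / p|) μ :=
    ((hνint.sub (hηint.div_const p)).abs).const_mul 2
  have hφx : ∀ x, η x / p - (1 - η x) / (1 - p) = (η x / p - 1) / (1 - p) := by
    intro x
    field_simp
    ring
  have hkey : (∫ x in {x | 0 ≤ η x / p - 1}, (η x / p - (1 - η x) / (1 - p)) ∂μ)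
      - ∫ x in {x | 0 ≤ ν x - 1}, (η x / p - (1 - η x) / (1 - p)) ∂μ
      ≤ ∫ x, 2 * |ν x - η x / p| ∂μ := by
    rw [← integral_indicator hAs, ← integral_indicator hAv,
      ← integral_sub (hφint.indicator hAs) (hφint.indicator hAv)]
    refine integral_mono ((hφint.indicator hAs).sub (hφint.indicator hAv)) hrhsint ?_
    intro x
    by_cases hs : x ∈ {x | 0 ≤ η x / p - 1} <;> by_cases hv : x ∈ {x | 0 ≤ ν x - 1}
    · simp only [Pi.sub_apply, Set.indicator_of_mem hs, Set.indicator_of_mem hv, sub_self]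
      positivity
    · have hs' : (0:ℝ) ≤ η x / p - 1 := hs
      have hv' : ν x - 1 < 0 := lt_of_not_ge hv
      have habs : |ν x - η x / p| = η x / p - ν x := by
        rw [abs_of_neg (by linarith)]
        ring
      simp only [Pi.sub_apply, Set.indicator_of_mem hs, Set.indicator_of_notMem hv,
        sub_zero]
      rw [hφx x, habs, div_le_iff₀ h1p]
      nlinarith [mul_nonneg hs' (by linarith : (0:ℝ) ≤ 1 - 2 * p),
        mul_nonneg (by linarith : (0:ℝ) ≤ 1 - ν x) (le_of_lt h1p)]
    · have hs' : η x / p - 1 < 0 := lt_of_not_ge hs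
      have hv' : (0:ℝ) ≤ ν x - 1 := hv
      have habs : |ν x - η x / p| = ν x - η x / p := by
        rw [abs_of_nonneg (by linarith)]
      simp only [Pi.sub_apply, Set.indicator_of_notMem hs, Set.indicator_of_mem hv,
        zero_sub]
      rw [hφx x, habs,
        show -((η x / p - 1) / (1 - p)) = (1 - η x / p) / (1 - p) by ring,
        div_le_iff₀ h1p]
      nlinarith [mul_nonneg (by linarith : (0:ℝ) ≤ 1 - η x / p)
          (by linarith : (0:ℝ) ≤ 1 - 2 * p),
        mul_nonneg (by linarith : (0:ℝ) ≤ ν x - 1) (le_of_lt h1p)]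
    · simp only [Pi.sub_apply, Set.indicator_of_notMem hs, Set.indicator_of_notMem hv,
        sub_self]
      positivity
  rw [hrbal (fun x => ν x - 1) (hν.sub_const 1),
    hrbal (fun x => η x / p - 1) ((hηmeas.div_const p).sub_const 1)]
  have hcm : ∫ x, 2 * |ν x - η x / p| ∂μ = 2 * ∫ x, |ν x - η x / p| ∂μ :=
    integral_const_mul 2 _
  rw [hcm] at hkey
  linarith

end
end
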